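/- Let R = {p ∈ [0,1]^n : q̆_V(p) > 0} and let S be the Shearer region (an open set, characterized by q̆_T(p) > 0 for all T). If f : [0,1] → R is continuous with f(0) ∈ S, then f(t) ∈ S for all t ∈ [0,1]. -/

import Mathlib

open Finset

/-- alternating-sign independence polynomial over ℝ -/
def qbarR {V : Type*} [DecidableEq V] (G : SimpleGraph V) [DecidableRel G.Adj]
    (p : V → ℝ) (S : Finset V) : ℝ :=
  ∑ I ∈ S.powerset.filter (fun I => ∀ u ∈ I, ∀ v ∈ I, ¬ G.Adj u v),
    (-1 : ℝ) ^ I.card * ∏ v ∈ I, p v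

lemma qbar_insert {V : Type*} [DecidableEq V] (G : SimpleGraph V) [DecidableRel G.Adj]
    (p : V → ℝ) {T : Finset V} {v : V} (hv : v ∉ T) :
    qbarR G p (insert v T) = qbarR G p T
      - p v * qbarR G p (T.filter fun u => ¬ G.Adj u v) := by
  have hd : Disjoint
      (T.powerset.filter (fun I => ∀ u ∈ I, ∀ v ∈ I, ¬ G.Adj u v))
      ((T.powerset.image (insert v)).filter (fun I => ∀ u ∈ I, ∀ v ∈ I, ¬ G.Adj u v)) := by
    rw [Finset.disjoint_left]
    intro J hJ hJ'
    rcases Finset.mem_image.mp (Finset.mem_of_mem_filter _ hJ') with ⟨K, _, rfl⟩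
    exact hv (Finset.mem_powerset.mp (Finset.mem_of_mem_filter _ hJ)
      (Finset.mem_insert_self _ _))
  have hset : (T.powerset.image (insert v)).filter
        (fun I => ∀ u ∈ I, ∀ v ∈ I, ¬ G.Adj u v)
      = ((T.filter fun u => ¬ G.Adj u v).powerset.filter
          (fun I => ∀ u ∈ I, ∀ v ∈ I, ¬ G.Adj u v)).image (insert v) := by
    ext J
    simp only [Finset.mem_filter, Finset.mem_image, Finset.mem_powerset]
    constructor
    · rintro ⟨⟨K, hK, rfl⟩, hind⟩
      have hvK : v ∉ K := fun hc => hv (hK hc)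
      refine ⟨K, ⟨?_, ?_⟩, rfl⟩
      · intro u hu
        refine Finset.mem_filter.mpr ⟨hK hu, ?_⟩
        exact hind u (Finset.mem_insert_of_mem hu) v (Finset.mem_insert_self _ _)
      · intro u hu w hw
        exact hind u (Finset.mem_insert_of_mem hu) w (Finset.mem_insert_of_mem hw)
    · rintro ⟨K, ⟨hK, hind⟩, rfl⟩
      refine ⟨⟨K, fun u hu => (Finset.mem_filter.mp (hK hu)).1, rfl⟩, ?_⟩
      intro u hu w hw
      rcases Finset.mem_insert.mp hu with hu | hu
      · rcases Finset.mem_insert.mp hw with hw | hw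
        · rw [hu, hw]; exact G.irrefl
        · rw [hu]
          intro h
          exact (Finset.mem_filter.mp (hK hw)).2 (G.adj_symm h)
      · rcases Finset.mem_insert.mp hw with hw | hw
        · rw [hw]; exact (Finset.mem_filter.mp (hK hu)).2
        · exact hind u hu w hw
  have hinj2 : ∀ x ∈ (T.filter fun u => ¬ G.Adj u v).powerset.filter
        (fun I => ∀ u ∈ I, ∀ v ∈ I, ¬ G.Adj u v),
      ∀ y ∈ (T.filter fun u => ¬ G.Adj u v).powerset.filter
        (fun I => ∀ u ∈ I, ∀ v ∈ I, ¬ G.Adj u v),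
      insert v x = insert v y → x = y := by
    intro x hx y hy h
    have hvx : v ∉ x := fun hc =>
      hv (Finset.mem_of_mem_filter _
        (Finset.mem_powerset.mp (Finset.mem_of_mem_filter _ hx) hc))
    have hvy : v ∉ y := fun hc =>
      hv (Finset.mem_of_mem_filter _
        (Finset.mem_powerset.mp (Finset.mem_of_mem_filter _ hy) hc))
    rw [← Finset.erase_insert hvx, ← Finset.erase_insert hvy, h]
  have key : ∑ J ∈ (T.filter fun u => ¬ G.Adj u v).powerset.filter
        (fun I => ∀ u ∈ I, ∀ v ∈ I, ¬ G.Adj u v),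
        (-1 : ℝ) ^ (insert v J).card * ∏ w ∈ insert v J, p w
      = -(p v * ∑ J ∈ (T.filter fun u => ¬ G.Adj u v).powerset.filter
          (fun I => ∀ u ∈ I, ∀ v ∈ I, ¬ G.Adj u v),
          (-1 : ℝ) ^ J.card * ∏ w ∈ J, p w) := by
    rw [Finset.mul_sum, ← Finset.sum_neg_distrib]
    apply Finset.sum_congr rfl
    intro J hJ
    have hvJ : v ∉ J := fun hc =>
      hv (Finset.mem_of_mem_filter _
        (Finset.mem_powerset.mp (Finset.mem_of_mem_filter _ hJ) hc))
    rw [Finset.card_insert_of_notMem hvJ, Finset.prod_insert hvJ, pow_succ]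
    ring
  unfold qbarR
  rw [Finset.powerset_insert, Finset.filter_union, Finset.sum_union hd, hset,
    Finset.sum_image hinj2, key]
  ring

lemma qbar_univ_le {V : Type*} [Fintype V] [DecidableEq V] (G : SimpleGraph V)
    [DecidableRel G.Adj] (p : V → ℝ) (hp : ∀ v, 0 ≤ p v)
    (hq : ∀ T : Finset V, 0 ≤ qbarR G p T) :
    ∀ T : Finset V, qbarR G p univ ≤ qbarR G p T := by
  classical
  suffices h : ∀ k : ℕ, ∀ T : Finset V, (univ \ T).card ≤ k →
      qbarR G p univ ≤ qbarR G p T by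
    intro T; exact h _ T le_rfl
  intro k
  induction k with
  | zero =>
    intro T hT
    have he : univ \ T = ∅ := Finset.card_eq_zero.mp (Nat.le_zero.mp hT)
    have hTu : T = univ := by
      apply Finset.eq_univ_of_forall
      intro x
      by_contra hx
      have hxm : x ∈ univ \ T := Finset.mem_sdiff.mpr ⟨Finset.mem_univ x, hx⟩
      rw [he] at hxm
      exact absurd hxm (Finset.notMem_empty x)
    rw [hTu]
  | succ k ih =>
    intro T hT
    by_cases hTu : T = univ
    · rw [hTu]
    · obtain ⟨v, hv⟩ : ∃ v, v ∈ univ \ T := by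
        by_contra h
        push_neg at h
        exact hTu (Finset.eq_univ_of_forall fun x => by
          by_contra hx
          exact h x (Finset.mem_sdiff.mpr ⟨Finset.mem_univ x, hx⟩))
      have hvT : v ∉ T := (Finset.mem_sdiff.mp hv).2
      have hrec := qbar_insert G p hvT
      have h1 : qbarR G p (insert v T) ≤ qbarR G p T := by
        have := mul_nonneg (hp v) (hq (T.filter fun u => ¬ G.Adj u v))
        linarith
      have hcard : (univ \ insert v T).card ≤ k := by
        have hsd : univ \ insert v T = (univ \ T).erase v := by
          ext x
          simp only [Finset.mem_sdiff, Finset.mem_erase, Finset.mem_insert,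
            Finset.mem_univ, true_and, not_or]
          try tauto
        rw [hsd, Finset.card_erase_of_mem hv]
        omega
      exact le_trans (ih (insert v T) hcard) h1

/-- let `R = {p ∈ [0,1]^V : q̆_V(p) > 0}` and let `S` be the Shearer
region (`q̆_T(p) > 0` for all `T`).  If `f : [0,1] → R` is continuous with
`f(0) ∈ S`, then `f(t) ∈ S` for all `t ∈ [0,1]`. -/
theorem stmt16 {V : Type*} [Fintype V] [DecidableEq V] (G : SimpleGraph V)
    [DecidableRel G.Adj] (f : ℝ → V → ℝ)
    (hcont : ContinuousOn f (Set.Icc (0 : ℝ) 1))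
    (hrange : ∀ t ∈ Set.Icc (0 : ℝ) 1,
      (∀ v, f t v ∈ Set.Icc (0 : ℝ) 1) ∧ 0 < qbarR G (f t) Finset.univ)
    (h0 : ∀ T : Finset V, 0 < qbarR G (f 0) T) :
    ∀ t ∈ Set.Icc (0 : ℝ) 1, ∀ T : Finset V, 0 < qbarR G (f t) T := by
  classical
  haveI : PreconnectedSpace (Set.Icc (0 : ℝ) 1) :=
    Subtype.preconnectedSpace isPreconnected_Icc
  have hg : Continuous fun t : Set.Icc (0 : ℝ) 1 => f t.1 := hcont.restrict
  have hqc : ∀ S : Finset V,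
      Continuous fun t : Set.Icc (0 : ℝ) 1 => qbarR G (f t.1) S := by
    intro S
    unfold qbarR
    apply continuous_finset_sum
    intro J _
    exact continuous_const.mul (continuous_finset_prod _ fun v _ =>
      (continuous_apply v).comp hg)
  set A : Set (Set.Icc (0 : ℝ) 1) :=
    ⋂ S : Finset V, {t | 0 < qbarR G (f t.1) S} with hA
  have hopen : IsOpen A := by
    apply isOpen_iInter_of_finite
    intro S
    exact isOpen_lt continuous_const (hqc S)
  have hAeq : A = ⋂ S : Finset V, {t : Set.Icc (0 : ℝ) 1 | 0 ≤ qbarR G (f t.1) S} := by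
    apply Set.Subset.antisymm
    · intro t ht
      simp only [hA, Set.mem_iInter, Set.mem_setOf_eq] at ht ⊢
      exact fun S => le_of_lt (ht S)
    · intro t ht
      simp only [hA, Set.mem_iInter, Set.mem_setOf_eq] at ht ⊢
      intro S
      have hle := qbar_univ_le G (f t.1)
        (fun v => ((hrange t.1 t.2).1 v).1) ht S
      exact lt_of_lt_of_le (hrange t.1 t.2).2 hle
  have hclosed : IsClosed A := by
    rw [hAeq]
    exact isClosed_iInter fun S => isClosed_le continuous_const (hqc S)
  have hne : A.Nonempty := by
    refine ⟨⟨0, by constructor <;> norm_num⟩, ?_⟩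
    simp only [hA, Set.mem_iInter, Set.mem_setOf_eq]
    exact h0
  have huniv : A = Set.univ := IsClopen.eq_univ ⟨hclosed, hopen⟩ hne
  intro t ht S
  have hmem : (⟨t, ht⟩ : Set.Icc (0 : ℝ) 1) ∈ A := huniv ▸ Set.mem_univ _
  simp only [hA, Set.mem_iInter, Set.mem_setOf_eq] at hmem
  exact hmem S
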